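/- If C is a self-complementary code over F_q of length n and v ∈ F_q^n has Hamming distance at least r from every codeword of C, then r ≤ (q-1)n/q. -/

import Mathlib

open Finset

/-- if `C` is a nonempty self-complementary code over `F_q` of length `n` and
`v` has Hamming distance at least `r` from every codeword, then `r ≤ (q-1)n/q`. -/
theorem le_of_selfComplementary
    {F : Type} [Field F] [Fintype F] [DecidableEq F] {n : ℕ}
    (C : Finset (Fin n → F)) (hne : C.Nonempty)
    (hself : ∀ c ∈ C, ∀ ω : F, (fun _ => ω) + c ∈ C)
    (v : Fin n → F) (r : ℕ) (hr : ∀ c ∈ C, r ≤ hammingDist v c) :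
    (r : ℝ) ≤ ((Fintype.card F : ℝ) - 1) * n / (Fintype.card F : ℝ) := by
  obtain ⟨c, hc⟩ := hne
  set q := Fintype.card F with hq
  have hq2 : 2 ≤ q := Fintype.one_lt_card
  -- sum over ω of hammingDist v (const ω + c) = n * (q - 1)
  have hsum : ∑ ω : F, hammingDist v ((fun _ => ω) + c) = n * (q - 1) := by
    have : ∀ ω : F, hammingDist v ((fun _ => ω) + c)
        = ∑ i : Fin n, if v i ≠ ω + c i then 1 else 0 := by
      intro ω
      simp [hammingDist, Finset.card_filter]
    simp_rw [this]
    rw [Finset.sum_comm]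
    have : ∀ i : Fin n, ∑ ω : F, (if v i ≠ ω + c i then 1 else 0) = q - 1 := by
      intro i
      have : ∑ ω : F, (if v i ≠ ω + c i then 1 else 0)
          = #{ω : F | v i ≠ ω + c i} := by
        rw [Finset.card_filter]
      rw [this]
      have : ({ω : F | v i ≠ ω + c i} : Finset F) = {v i - c i}ᶜ := by
        ext ω
        simp [eq_sub_iff_add_eq, eq_comm]
      rw [this, Finset.card_compl, Finset.card_singleton]
    simp_rw [this]
    simp [mul_comm]
  have hle : q * r ≤ n * (q - 1) := by
    calc q * r = ∑ _ω : F, r := by simp [mul_comm, hq]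
    _ ≤ ∑ ω : F, hammingDist v ((fun _ => ω) + c) :=
        Finset.sum_le_sum fun ω _ => hr _ (hself c hc ω)
    _ = n * (q - 1) := hsum
  have hqpos : (0:ℝ) < q := by positivity
  rw [le_div_iff₀ hqpos]
  have := (Nat.cast_le (α := ℝ)).2 hle
  push_cast [Nat.cast_sub (by omega : 1 ≤ q)] at this
  linarith
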